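/- Let d ≥ 1, let u, v ∈ ℝ^d, let δ ∈ (0,1), and let a be a standard Gaussian random variable (a ~ N(0,1)). Then Pr[‖a·u + v‖₂ ≥ δ·‖u‖₂] ≥ 1 − δ. -/

import Mathlib

open ProbabilityTheory MeasureTheory Real
open scoped NNReal ENNReal

lemma gauss_pdf_le (x : ℝ) :
    ProbabilityTheory.gaussianPDF 0 1 x ≤ ENNReal.ofReal (√(2 * π))⁻¹ := by
  rw [ProbabilityTheory.gaussianPDF, ProbabilityTheory.gaussianPDFReal]
  apply ENNReal.ofReal_le_ofReal
  have h1 : rexp (-(x - 0) ^ 2 / (2 * (1 : ℝ≥0))) ≤ 1 := by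
    rw [Real.exp_le_one_iff]
    have : (0:ℝ) ≤ (x - 0)^2 := sq_nonneg _
    simp only [NNReal.coe_one, mul_one]
    nlinarith
  calc (√(2 * π * (1:ℝ≥0)))⁻¹ * rexp (-(x - 0) ^ 2 / (2 * (1:ℝ≥0)))
      ≤ (√(2 * π * (1:ℝ≥0)))⁻¹ * 1 := mul_le_mul_of_nonneg_left h1 (by positivity)
    _ = (√(2 * π))⁻¹ := by norm_num

lemma gauss_interval (a b : ℝ) :
    ProbabilityTheory.gaussianReal 0 1 (Set.Ioo a b) ≤ ENNReal.ofReal ((b - a) / √(2 * π)) := by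
  rw [ProbabilityTheory.gaussianReal_apply 0 one_ne_zero]
  calc ∫⁻ x in Set.Ioo a b, ProbabilityTheory.gaussianPDF 0 1 x
      ≤ ∫⁻ _ in Set.Ioo a b, ENNReal.ofReal (√(2 * π))⁻¹ :=
        lintegral_mono fun x => gauss_pdf_le x
    _ = ENNReal.ofReal (√(2 * π))⁻¹ * volume (Set.Ioo a b) := by
        rw [setLIntegral_const]
    _ ≤ ENNReal.ofReal (√(2 * π))⁻¹ * ENNReal.ofReal (b - a) := by
        rw [Real.volume_Ioo]
    _ = ENNReal.ofReal ((b - a) / √(2 * π)) := by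
        rw [← ENNReal.ofReal_mul (by positivity)]
        ring_nf

theorem stmt_3 {d : ℕ} (hd : 1 ≤ d) (u v : EuclideanSpace ℝ (Fin d))
    (δ : ℝ) (hδ : δ ∈ Set.Ioo (0 : ℝ) 1) :
    ENNReal.ofReal (1 - δ) ≤
      ProbabilityTheory.gaussianReal 0 1 {a : ℝ | δ * ‖u‖ ≤ ‖a • u + v‖} := by
  obtain ⟨hδ0, hδ1⟩ := hδ
  by_cases hu : u = 0
  · have hset : {a : ℝ | δ * ‖u‖ ≤ ‖a • u + v‖} = Set.univ := by
      ext a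
      simp [hu, norm_nonneg]
    rw [hset]
    have huniv : ProbabilityTheory.gaussianReal 0 1 Set.univ = 1 := measure_univ
    rw [huniv]
    exact ENNReal.ofReal_le_one.mpr (by linarith)
  · have hu0 : (0:ℝ) < ‖u‖ := norm_pos_iff.mpr hu
    set c : ℝ := (inner ℝ u v : ℝ) / ‖u‖ ^ 2 with hc
    set s : Set ℝ := {a : ℝ | δ * ‖u‖ ≤ ‖a • u + v‖} with hs
    have hmeas : MeasurableSet s := by
      apply measurableSet_le measurable_const
      exact ((continuous_id.smul continuous_const).add continuous_const).norm.measurable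
    -- key geometric inequality
    have hkey : ∀ a : ℝ, δ ≤ |a + c| → δ * ‖u‖ ≤ ‖a • u + v‖ := by
      intro a ha
      have hCS : (inner ℝ u v : ℝ) * (inner ℝ u v : ℝ) ≤ (inner ℝ u u : ℝ) * (inner ℝ v v : ℝ) :=
        real_inner_mul_inner_self_le u v
      have hsq : (δ * ‖u‖) ^ 2 ≤ ‖a • u + v‖ ^ 2 := by
        rw [norm_add_sq_real]
        have h1 : (inner ℝ ((a : ℝ) • u) v : ℝ) = a * (inner ℝ u v : ℝ) := real_inner_smul_left u v a
        have h2 : ‖a • u‖ = |a| * ‖u‖ := by rw [norm_smul]; simp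
        have h3 : (inner ℝ u u : ℝ) = ‖u‖ ^ 2 := real_inner_self_eq_norm_sq u
        have h4 : (inner ℝ v v : ℝ) = ‖v‖ ^ 2 := real_inner_self_eq_norm_sq v
        have hCS' : (inner ℝ u v : ℝ) ^ 2 ≤ ‖u‖ ^ 2 * ‖v‖ ^ 2 := by
          have := real_inner_mul_inner_self_le u v
          rw [h3, h4] at this; nlinarith [this]
        have hac : δ ^ 2 ≤ (a + c) ^ 2 := by
          have : δ ^ 2 ≤ |a + c| ^ 2 := by
            apply pow_le_pow_left₀ (le_of_lt hδ0) ha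
          simpa [sq_abs] using this
        have hcc : c * ‖u‖ ^ 2 = (inner ℝ u v : ℝ) := by
          rw [hc, div_mul_cancel₀]; positivity
        rw [h1, h2]
        have habs : |a| ^ 2 = a ^ 2 := sq_abs a
        have h8 : (inner ℝ u v : ℝ) ^ 2 = c ^ 2 * ‖u‖ ^ 2 * ‖u‖ ^ 2 := by rw [← hcc]; ring
        have h6 : c ^ 2 * ‖u‖ ^ 2 ≤ ‖v‖ ^ 2 := by
          have h7 : c ^ 2 * ‖u‖ ^ 2 * ‖u‖ ^ 2 ≤ ‖v‖ ^ 2 * ‖u‖ ^ 2 := by nlinarith [hCS', h8]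
          exact le_of_mul_le_mul_right h7 (by positivity)
        have h9 : a * (c * ‖u‖ ^ 2) = a * (inner ℝ u v : ℝ) := by rw [hcc]
        nlinarith [mul_le_mul_of_nonneg_right hac (sq_nonneg ‖u‖), h6, h9, habs]
      have h5 : (0:ℝ) ≤ δ * ‖u‖ := by positivity
      nlinarith [norm_nonneg (a • u + v)]
    have hsub : sᶜ ⊆ Set.Ioo (-δ - c) (δ - c) := by
      intro a ha
      simp only [hs, Set.mem_compl_iff, Set.mem_setOf_eq, not_le] at ha
      have h := hkey a
      by_contra hcon
      simp only [Set.mem_Ioo, not_and_or, not_lt] at hcon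
      have : δ ≤ |a + c| := by
        rcases hcon with h1 | h2
        · calc δ ≤ -(a + c) := by linarith
            _ ≤ |a + c| := neg_le_abs _
        · calc δ ≤ a + c := by linarith
            _ ≤ |a + c| := le_abs_self _
      exact absurd (hkey a this) (not_le.mpr ha)
    have hint : ProbabilityTheory.gaussianReal 0 1 sᶜ ≤ ENNReal.ofReal δ := by
      calc ProbabilityTheory.gaussianReal 0 1 sᶜ
          ≤ ProbabilityTheory.gaussianReal 0 1 (Set.Ioo (-δ - c) (δ - c)) :=
            measure_mono hsub
        _ ≤ ENNReal.ofReal ((δ - c - (-δ - c)) / √(2 * π)) := gauss_interval _ _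
        _ ≤ ENNReal.ofReal δ := by
            apply ENNReal.ofReal_le_ofReal
            have hpi : (2:ℝ) ≤ √(2 * π) := by
              nlinarith [Real.sq_sqrt (by positivity : (0:ℝ) ≤ 2 * π),
                Real.sqrt_nonneg (2 * π), Real.pi_gt_three]
            have h2 : (0:ℝ) < √(2 * π) := by linarith
            rw [div_le_iff₀ h2]
            nlinarith
    have hcompl : ProbabilityTheory.gaussianReal 0 1 sᶜ =
        1 - ProbabilityTheory.gaussianReal 0 1 s := prob_compl_eq_one_sub hmeas
    rw [hcompl] at hint
    have h1 : ENNReal.ofReal (1 - δ) = 1 - ENNReal.ofReal δ := by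
      rw [ENNReal.ofReal_sub 1 (le_of_lt hδ0), ENNReal.ofReal_one]
    rw [h1, tsub_le_iff_right]
    rw [tsub_le_iff_right] at hint
    calc (1:ℝ≥0∞) ≤ ENNReal.ofReal δ + ProbabilityTheory.gaussianReal 0 1 s := hint
      _ = ProbabilityTheory.gaussianReal 0 1 s + ENNReal.ofReal δ := add_comm _ _
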